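/- arXiv:2401.12899 — 2 statements merged into one kernel-verified Lean document; each statement's English description precedes it below -/
import Mathlib

section
/- Let h > 0, k ≥ 1 and v ∈ H¹(ℝ). Then ⟨M_{h,k} v, v'⟩_{L²} ≤ 0. -/
open MeasureTheory Set

namespace Stmt13Aux

lemma prod_int (g : ℝ → ℝ) (hgm : Measurable g)
    (hA : Integrable (fun x => g x ^ 2) (volume : Measure ℝ)) (t : ℝ) :
    Integrable (fun x => g (x + t) * g x) (volume : Measure ℝ) := by
  have h1 : Integrable (fun x => g (x + t) ^ 2) (volume : Measure ℝ) :=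
    ((measurePreserving_add_right (volume : Measure ℝ) t).integrable_comp
      hA.aestronglyMeasurable).mpr hA
  refine Integrable.mono' (g := fun x => (g (x + t) ^ 2 + g x ^ 2) / 2) ?_
    (((hgm.comp (measurable_add_const t)).mul hgm).aestronglyMeasurable) ?_
  · exact (h1.add hA).div_const 2
  · filter_upwards with x
    rw [Real.norm_eq_abs, abs_mul]
    nlinarith [sq_nonneg (|g (x + t)| - |g x|), sq_abs (g x), sq_abs (g (x + t))]

lemma corr_bound (g : ℝ → ℝ) (hgm : Measurable g)
    (hA : Integrable (fun x => g x ^ 2) (volume : Measure ℝ)) (t : ℝ) :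
    (∫ x : ℝ, g (x + t) * g x) ≤ ∫ x : ℝ, g x ^ 2 := by
  have h1 : Integrable (fun x => g (x + t) ^ 2) (volume : Measure ℝ) :=
    ((measurePreserving_add_right (volume : Measure ℝ) t).integrable_comp
      hA.aestronglyMeasurable).mpr hA
  have hprod := prod_int g hgm hA t
  have hle : (∫ x : ℝ, g (x + t) * g x) ≤ ∫ x : ℝ, (g (x + t) ^ 2 + g x ^ 2) / 2 := by
    refine integral_mono hprod ((h1.add hA).div_const 2) fun x => ?_
    nlinarith [sq_nonneg (g (x + t) - g x)]
  calc (∫ x : ℝ, g (x + t) * g x) ≤ ∫ x : ℝ, (g (x + t) ^ 2 + g x ^ 2) / 2 := hle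
    _ = ((∫ x : ℝ, g (x + t) ^ 2) + ∫ x : ℝ, g x ^ 2) / 2 := by
        rw [← integral_add h1 hA, integral_div]
    _ = ∫ x : ℝ, g x ^ 2 := by
        rw [integral_add_right_eq_self (fun x => g x ^ 2) t]; ring

lemma abs_corr_bound (g : ℝ → ℝ) (hgm : Measurable g)
    (hA : Integrable (fun x => g x ^ 2) (volume : Measure ℝ)) (t : ℝ) :
    (∫ x : ℝ, |g (x + t) * g x|) ≤ ∫ x : ℝ, g x ^ 2 := by
  have hA' : Integrable (fun x => |g x| ^ 2) (volume : Measure ℝ) := by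
    simpa [sq_abs] using hA
  have := corr_bound (fun x => |g x|) hgm.abs hA' t
  simpa [abs_mul, sq_abs] using this

lemma fubini_int (g : ℝ → ℝ) (hgm : Measurable g)
    (hA : Integrable (fun x => g x ^ 2) (volume : Measure ℝ)) (a b : ℝ) :
    Integrable (Function.uncurry fun x t => g (x + t) * g x)
      ((volume : Measure ℝ).prod ((volume : Measure ℝ).restrict (Ioc a b))) := by
  have hFm : StronglyMeasurable (Function.uncurry fun x t => g (x + t) * g x) :=
    (((hgm.comp measurable_add).mul (hgm.comp measurable_fst)).stronglyMeasurable)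
  rw [integrable_prod_iff' hFm.aestronglyMeasurable]
  constructor
  · exact Filter.Eventually.of_forall fun t => prod_int g hgm hA t
  · simp only [Function.uncurry]
    refine Integrable.mono' (g := fun _ => ∫ x : ℝ, g x ^ 2)
      (integrable_const _) (hFm.norm.integral_prod_left').aestronglyMeasurable ?_
    filter_upwards with t
    have h1 : (∫ x : ℝ, ‖g (x + t) * g x‖) ≤ ∫ x : ℝ, g x ^ 2 := by
      simpa [Real.norm_eq_abs, abs_mul] using abs_corr_bound g hgm hA t
    have h2 : 0 ≤ ∫ x : ℝ, ‖g (x + t) * g x‖ := integral_nonneg fun x => norm_nonneg _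
    rw [Real.norm_eq_abs, abs_of_nonneg h2]
    exact h1

end Stmt13Aux

open Stmt13Aux

theorem stmt_13 (h k : ℝ) (hh : 0 < h) (hk : 1 ≤ k)
    (v : ℝ → ℝ) (hdiff : Differentiable ℝ v)
    (hv : MemLp v 2 (volume : Measure ℝ))
    (hv' : MemLp (deriv v) 2 (volume : Measure ℝ)) :
    (∫ ξ : ℝ,
        ((v (ξ + h) - 2 * v ξ + v (ξ - h)) / h ^ 2
          + (2 * (k - 1) / (h * (k + 1)))
              * ((v (ξ + h) - v (ξ - h)) / (2 * h) - deriv v ξ)) * deriv v ξ) ≤ 0 := by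
  set g := deriv v with hgdef
  have hgm : Measurable g := measurable_deriv v
  have hA : Integrable (fun x => g x ^ 2) (volume : Measure ℝ) := hv'.integrable_sq
  set A := ∫ x : ℝ, g x ^ 2 with hAdef
  have hAnn : 0 ≤ A := integral_nonneg fun x => sq_nonneg _
  set c := 2 * (k - 1) / (h * (k + 1)) with hcdef
  have hc : 0 ≤ c := by
    apply div_nonneg <;> nlinarith
  have hne : h ≠ 0 := ne_of_gt hh
  -- local interval integrability of g
  have hloc : ∀ a b : ℝ, IntervalIntegrable g volume a b := by
    intro a b
    rw [intervalIntegrable_iff]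
    refine Integrable.mono' (g := fun x => 1 + g x ^ 2) ?_ hgm.aestronglyMeasurable.restrict ?_
    · exact (integrableOn_const measure_Ioc_lt_top.ne).add hA.integrableOn
    · filter_upwards with x
      rw [Real.norm_eq_abs]
      nlinarith [sq_nonneg (|g x| - 1), sq_abs (g x)]
  -- FTC representations
  have hftc : ∀ a b : ℝ, (∫ t in a..b, g t) = v b - v a := fun a b =>
    intervalIntegral.integral_deriv_eq_sub (fun x _ => hdiff x) (hloc a b)
  have hSp : ∀ ξ : ℝ, v (ξ + h) - v ξ = ∫ t in Ioc 0 h, g (ξ + t) := by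
    intro ξ
    have h1 : (∫ t in (0:ℝ)..h, g (ξ + t)) = ∫ x in (ξ + 0)..(ξ + h), g x :=
      intervalIntegral.integral_comp_add_left g ξ
    rw [intervalIntegral.integral_of_le hh.le] at h1
    rw [h1, hftc]
    simp
  have hSm : ∀ ξ : ℝ, v ξ - v (ξ - h) = ∫ t in Ioc (-h) 0, g (ξ + t) := by
    intro ξ
    have h1 : (∫ t in (-h)..(0:ℝ), g (ξ + t)) = ∫ x in (ξ + -h)..(ξ + 0), g x :=
      intervalIntegral.integral_comp_add_left g ξ
    rw [intervalIntegral.integral_of_le (by linarith : (-h:ℝ) ≤ 0)] at h1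
    rw [h1, hftc]
    simp [sub_eq_add_neg]
  -- the correlation function
  set C : ℝ → ℝ := fun t => ∫ x : ℝ, g (x + t) * g x with hCdef
  have hCeven : ∀ t : ℝ, C (-t) = C t := by
    intro t
    have e1 : (fun x : ℝ => g (x + -t) * g x) = fun x => (fun y => g y * g (y + t)) (x + -t) := by
      funext x; simp
    have e2 : (∫ x : ℝ, (fun y => g y * g (y + t)) (x + -t)) = ∫ y : ℝ, g y * g (y + t) :=
      integral_add_right_eq_self (fun y => g y * g (y + t)) (-t)
    calc C (-t) = ∫ x : ℝ, g (x + -t) * g x := rfl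
      _ = ∫ x : ℝ, (fun y => g y * g (y + t)) (x + -t) := by rw [e1]
      _ = ∫ y : ℝ, g y * g (y + t) := e2
      _ = ∫ y : ℝ, g (y + t) * g y := by congr 1; funext y; ring
      _ = C t := rfl
  have hCbound : ∀ t : ℝ, C t ≤ A := fun t => corr_bound g hgm hA t
  -- Fubini for the two intervals
  have hFub : ∀ a b : ℝ,
      (∫ ξ : ℝ, (∫ t in Ioc a b, g (ξ + t)) * g ξ) = ∫ t in Ioc a b, C t := by
    intro a b
    have hswap := integral_integral_swap
      (f := fun x t => g (x + t) * g x)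
      (μ := (volume : Measure ℝ)) (ν := (volume : Measure ℝ).restrict (Ioc a b))
      (fubini_int g hgm hA a b)
    calc (∫ ξ : ℝ, (∫ t in Ioc a b, g (ξ + t)) * g ξ)
        = ∫ ξ : ℝ, ∫ t in Ioc a b, g (ξ + t) * g ξ := by
          congr 1; funext ξ; rw [← integral_mul_const]
      _ = ∫ t in Ioc a b, ∫ ξ : ℝ, g (ξ + t) * g ξ := hswap
      _ = ∫ t in Ioc a b, C t := rfl
  have hSpInt : ∀ a b : ℝ,
      Integrable (fun ξ : ℝ => (∫ t in Ioc a b, g (ξ + t)) * g ξ) (volume : Measure ℝ) := by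
    intro a b
    have := (fubini_int g hgm hA a b).integral_prod_left
    refine this.congr (Filter.Eventually.of_forall fun ξ => ?_)
    simp only [Function.uncurry]
    rw [← integral_mul_const]
  have hCInt : ∀ a b : ℝ, IntegrableOn C (Ioc a b) (volume : Measure ℝ) := by
    intro a b
    exact (fubini_int g hgm hA a b).integral_prod_right
  -- D := ∫_{(0,h]} C
  set D := ∫ t in Ioc 0 h, C t with hDdef
  have hIM : (∫ t in Ioc (-h) 0, C t) = D := by
    have h1 : (∫ t in (0:ℝ)..h, C (-t)) = ∫ t in (-h)..(0:ℝ), C t := by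
      simpa using intervalIntegral.integral_comp_neg (a := (0:ℝ)) (b := h) C
    have h2 : (∫ t in (0:ℝ)..h, C (-t)) = ∫ t in (0:ℝ)..h, C t := by
      congr 1; funext t; exact hCeven t
    rw [h2] at h1
    rw [intervalIntegral.integral_of_le (by linarith : (-h:ℝ) ≤ 0)] at h1
    rw [intervalIntegral.integral_of_le hh.le] at h1
    exact h1.symm
  have hDle : D ≤ h * A := by
    have hmono : (∫ t in Ioc 0 h, C t) ≤ ∫ _t in Ioc (0:ℝ) h, A := by
      refine setIntegral_mono_on (hCInt 0 h) (integrableOn_const measure_Ioc_lt_top.ne)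
        measurableSet_Ioc fun t _ => hCbound t
    have hconst : (∫ _t in Ioc (0:ℝ) h, A) = h * A := by
      rw [setIntegral_const, Real.volume_real_Ioc_of_le hh.le, smul_eq_mul]
      ring_nf
    rw [← hconst]; exact hmono
  -- rewrite the integrand pointwise
  set α := 1 / h ^ 2 + c / (2 * h) with hαdef
  set β := c / (2 * h) - 1 / h ^ 2 with hβdef
  have hpt : ∀ ξ : ℝ,
      ((v (ξ + h) - 2 * v ξ + v (ξ - h)) / h ^ 2
          + c * ((v (ξ + h) - v (ξ - h)) / (2 * h) - g ξ)) * g ξ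
        = α * ((∫ t in Ioc 0 h, g (ξ + t)) * g ξ)
          + (β * ((∫ t in Ioc (-h) 0, g (ξ + t)) * g ξ) - c * g ξ ^ 2) := by
    intro ξ
    have e1 : v (ξ + h) = v ξ + ∫ t in Ioc 0 h, g (ξ + t) := by
      have := hSp ξ; linarith
    have e2 : v (ξ - h) = v ξ - ∫ t in Ioc (-h) 0, g (ξ + t) := by
      have := hSm ξ; linarith
    rw [e1, e2, hαdef, hβdef]
    field_simp
    ring
  -- compute the integral
  have hInt : (∫ ξ : ℝ,
      ((v (ξ + h) - 2 * v ξ + v (ξ - h)) / h ^ 2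
          + c * ((v (ξ + h) - v (ξ - h)) / (2 * h) - g ξ)) * g ξ)
      = α * D + (β * D - c * A) := by
    have hi1 : Integrable (fun ξ : ℝ => α * ((∫ t in Ioc 0 h, g (ξ + t)) * g ξ))
        (volume : Measure ℝ) := (hSpInt 0 h).const_mul α
    have hi2 : Integrable (fun ξ : ℝ => β * ((∫ t in Ioc (-h) 0, g (ξ + t)) * g ξ))
        (volume : Measure ℝ) := (hSpInt (-h) 0).const_mul β
    have hi3 : Integrable (fun ξ : ℝ => c * g ξ ^ 2) (volume : Measure ℝ) := hA.const_mul c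
    calc (∫ ξ : ℝ,
        ((v (ξ + h) - 2 * v ξ + v (ξ - h)) / h ^ 2
            + c * ((v (ξ + h) - v (ξ - h)) / (2 * h) - g ξ)) * g ξ)
        = ∫ ξ : ℝ, (α * ((∫ t in Ioc 0 h, g (ξ + t)) * g ξ)
            + (β * ((∫ t in Ioc (-h) 0, g (ξ + t)) * g ξ) - c * g ξ ^ 2)) := by
          congr 1; funext ξ; exact hpt ξ
      _ = (∫ ξ : ℝ, α * ((∫ t in Ioc 0 h, g (ξ + t)) * g ξ))
            + ∫ ξ : ℝ, (β * ((∫ t in Ioc (-h) 0, g (ξ + t)) * g ξ) - c * g ξ ^ 2) :=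
          integral_add hi1 (hi2.sub hi3)
      _ = (∫ ξ : ℝ, α * ((∫ t in Ioc 0 h, g (ξ + t)) * g ξ))
            + ((∫ ξ : ℝ, β * ((∫ t in Ioc (-h) 0, g (ξ + t)) * g ξ))
              - ∫ ξ : ℝ, c * g ξ ^ 2) := by
          rw [integral_sub hi2 hi3]
      _ = α * D + (β * D - c * A) := by
          rw [integral_const_mul, integral_const_mul, integral_const_mul, hFub 0 h, hFub (-h) 0,
            hIM, ← hAdef, ← hDdef]
  rw [hInt]
  -- final estimate
  have hsum : α + β = c / h := by
    rw [hαdef, hβdef]; field_simp; ring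
  have key : α * D + (β * D - c * A) = (c / h) * D - c * A := by
    have : α * D + β * D = (α + β) * D := by ring
    rw [sub_eq_add_neg, ← add_assoc, this, hsum]; ring
  rw [key]
  have h1 : (c / h) * D ≤ (c / h) * (h * A) :=
    mul_le_mul_of_nonneg_left hDle (div_nonneg hc hh.le)
  have h2 : (c / h) * (h * A) = c * A := by field_simp
  linarith
end

section
/- Let f ∈ C³(ℝ) and define f_{3,∞}(ξ) = sup_{|ξ'-ξ| ≤ 1} |f'''(ξ')|; assume f_{3,∞} ∈ L²(ℝ). Then for every 0 < h < 1 and k ≥ 1, ‖M_{h,k} f - f''‖_{L²} ≤ 2h ‖f_{3,∞}‖_{L²}. -/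
open MeasureTheory

open Set in
private lemma myIDW {n N : ℕ} (f : ℝ → ℝ) (hf : ContDiff ℝ N f) {s : Set ℝ}
    (hs : UniqueDiffOn ℝ s) {x : ℝ} (hx : x ∈ s) (hn : n ≤ N) :
    iteratedDerivWithin n f s x = iteratedDeriv n f x := by
  rw [iteratedDerivWithin_eq_iteratedFDerivWithin, iteratedDeriv_eq_iteratedFDeriv]
  congr 1
  have H : HasFTaylorSeriesUpToOn (N : ℕ∞) f (ftaylorSeriesWithin ℝ f univ) univ :=
    (hf.contDiffOn).ftaylorSeriesWithin uniqueDiffOn_univ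
  rw [ftaylorSeriesWithin_univ] at H
  exact ((H.mono (subset_univ s)).eq_iteratedFDerivWithin_of_uniqueDiffOn
    (by exact_mod_cast hn) hs hx).symm

open Set in
private lemma myTaylor3 (f : ℝ → ℝ) (hf : ContDiff ℝ 3 f) {a b : ℝ} (hab : a < b) :
    ∃ c ∈ Set.Ioo a b, f b = f a + deriv f a * (b - a) + deriv (deriv f) a * (b - a) ^ 2 / 2
      + iteratedDeriv 3 f c * (b - a) ^ 3 / 6 := by
  have hu : UniqueDiffOn ℝ (Icc a b) := uniqueDiffOn_Icc hab
  have hd2 : Differentiable ℝ (iteratedDeriv 2 f) :=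
    hf.differentiable_iteratedDeriv 2 (by norm_num)
  have h1 : ContDiffOn ℝ 2 f (Icc a b) := (hf.of_le (by norm_num)).contDiffOn
  have h2 : DifferentiableOn ℝ (iteratedDerivWithin 2 f (Icc a b)) (Ioo a b) := by
    apply DifferentiableOn.congr (hd2.differentiableOn)
    intro x hx
    exact myIDW f hf hu (Ioo_subset_Icc_self hx) (by norm_num)
  obtain ⟨c, hc, hEq⟩ := taylor_mean_remainder_lagrange (n := 2) hab.ne
    (by rwa [uIcc_of_le hab.le]) (by rwa [uIcc_of_le hab.le, uIoo_of_le hab.le])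
  rw [uIcc_of_le hab.le] at hEq
  rw [uIoo_of_le hab.le] at hc
  refine ⟨c, hc, ?_⟩
  rw [taylor_within_apply] at hEq
  have e0 : iteratedDerivWithin 0 f (Icc a b) a = f a :=
    myIDW f hf hu (left_mem_Icc.2 hab.le) (by norm_num)
  have e1 : iteratedDerivWithin 1 f (Icc a b) a = deriv f a := by
    rw [myIDW f hf hu (left_mem_Icc.2 hab.le) (by norm_num), iteratedDeriv_one]
  have e2 : iteratedDerivWithin 2 f (Icc a b) a = deriv (deriv f) a := by
    rw [myIDW f hf hu (left_mem_Icc.2 hab.le) (by norm_num)]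
    rw [show (2:ℕ) = 1 + 1 from rfl, iteratedDeriv_succ, iteratedDeriv_one]
  have e3 : iteratedDerivWithin 3 f (Icc a b) c = iteratedDeriv 3 f c :=
    myIDW f hf hu (Ioo_subset_Icc_self hc) le_rfl
  rw [Finset.sum_range_succ, Finset.sum_range_succ, Finset.sum_range_one, e0, e1, e2, e3] at hEq
  simp only [smul_eq_mul] at hEq
  norm_num [Nat.factorial] at hEq
  linarith

open Set in
private lemma myTaylorLeft (f : ℝ → ℝ) (hf : ContDiff ℝ 3 f) {ξ h : ℝ} (hh : 0 < h) :
    ∃ c ∈ Set.Ioo (ξ - h) ξ, f (ξ - h) = f ξ - deriv f ξ * h + deriv (deriv f) ξ * h ^ 2 / 2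
      - iteratedDeriv 3 f c * h ^ 3 / 6 := by
  set g : ℝ → ℝ := fun t => f (-t) with hg
  have hgc : ContDiff ℝ 3 g := hf.comp contDiff_neg
  obtain ⟨c', hc', hEq⟩ := myTaylor3 g hgc (a := -ξ) (b := -ξ + h) (by linarith)
  have i1 : ∀ x, deriv g x = -deriv f (-x) := by
    intro x
    have := iteratedDeriv_comp_neg (𝕜 := ℝ) 1 f x
    simpa [iteratedDeriv_one, g] using this
  have i2 : deriv (deriv g) (-ξ) = deriv (deriv f) ξ := by
    have h2 : iteratedDeriv 2 g (-ξ) = iteratedDeriv 2 f ξ := by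
      simpa [g] using iteratedDeriv_comp_neg (𝕜 := ℝ) 2 f (-ξ)
    rw [show iteratedDeriv 2 f = deriv (deriv f) by
      rw [show (2:ℕ) = 1+1 from rfl, iteratedDeriv_succ, iteratedDeriv_one]] at h2
    rw [show iteratedDeriv 2 g = deriv (deriv g) by
      rw [show (2:ℕ) = 1+1 from rfl, iteratedDeriv_succ, iteratedDeriv_one]] at h2
    exact h2
  have i3 : iteratedDeriv 3 g c' = -iteratedDeriv 3 f (-c') := by
    have := iteratedDeriv_comp_neg (𝕜 := ℝ) 3 f c'
    simp only [g] at *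
    rw [this]; norm_num
  refine ⟨-c', ⟨by cases hc'; linarith, by cases hc'; linarith⟩, ?_⟩
  have e1 : g (-ξ + h) = f (ξ - h) := by simp [g]; ring_nf
  have e2 : g (-ξ) = f ξ := by simp [g]
  rw [e1, e2, i1, i2, i3] at hEq
  rw [hEq]; ring_nf

theorem stmt_14 (f : ℝ → ℝ) (hf : ContDiff ℝ 3 f)
    (f3 : ℝ → ℝ)
    (hf3 : f3 = fun ξ => sSup ((fun ξ' => |iteratedDeriv 3 f ξ'|) '' Set.Icc (ξ - 1) (ξ + 1)))
    (hf3L2 : MemLp f3 2 (volume : Measure ℝ))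
    (h k : ℝ) (hh0 : 0 < h) (hh1 : h < 1) (hk : 1 ≤ k) :
    eLpNorm
        (fun ξ =>
          (f (ξ + h) - 2 * f ξ + f (ξ - h)) / h ^ 2
            + (2 * (k - 1) / (h * (k + 1)))
                * ((f (ξ + h) - f (ξ - h)) / (2 * h) - deriv f ξ)
            - deriv (deriv f) ξ)
        2 (volume : Measure ℝ)
      ≤ ENNReal.ofReal (2 * h) * eLpNorm f3 2 (volume : Measure ℝ) := by
  have hcont : Continuous (fun ξ' => |iteratedDeriv 3 f ξ'|) :=
    (hf.continuous_iteratedDeriv 3 le_rfl).abs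
  -- pointwise bound
  have key : ∀ ξ : ℝ,
      ‖(f (ξ + h) - 2 * f ξ + f (ξ - h)) / h ^ 2
        + (2 * (k - 1) / (h * (k + 1)))
            * ((f (ξ + h) - f (ξ - h)) / (2 * h) - deriv f ξ)
        - deriv (deriv f) ξ‖ ≤ 2 * h * f3 ξ := by
    intro ξ
    obtain ⟨c₁, hc₁, hEq1⟩ := myTaylor3 f hf (a := ξ) (b := ξ + h) (by linarith)
    obtain ⟨c₂, hc₂, hEq2⟩ := myTaylorLeft f hf (ξ := ξ) hh0
    set A := iteratedDeriv 3 f c₁ with hA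
    set B := iteratedDeriv 3 f c₂ with hB
    have hbdd : BddAbove ((fun ξ' => |iteratedDeriv 3 f ξ'|) '' Set.Icc (ξ - 1) (ξ + 1)) :=
      (isCompact_Icc.image hcont).bddAbove
    have memIcc : ∀ c : ℝ, c ∈ Set.Ioo (ξ - h) (ξ + h) →
        |iteratedDeriv 3 f c| ≤ f3 ξ := by
      intro c hc
      rw [hf3]
      exact le_csSup hbdd ⟨c, ⟨by cases hc; linarith, by cases hc; linarith⟩, rfl⟩
    have hAle : |A| ≤ f3 ξ := memIcc c₁ ⟨by cases hc₁; linarith, by cases hc₁; linarith⟩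
    have hBle : |B| ≤ f3 ξ := memIcc c₂ ⟨by cases hc₂; linarith, by cases hc₂; linarith⟩
    have hM0 : 0 ≤ f3 ξ := le_trans (abs_nonneg A) hAle
    set r : ℝ := (k - 1) / (k + 1) with hr
    have hk1 : (0:ℝ) < k + 1 := by linarith
    have hr0 : 0 ≤ r := div_nonneg (by linarith) hk1.le
    have hr1 : r ≤ 1 := by
      rw [hr, div_le_one hk1]; linarith
    have hne : h ≠ 0 := ne_of_gt hh0
    have hE : (f (ξ + h) - 2 * f ξ + f (ξ - h)) / h ^ 2
        + (2 * (k - 1) / (h * (k + 1)))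
            * ((f (ξ + h) - f (ξ - h)) / (2 * h) - deriv f ξ)
        - deriv (deriv f) ξ = h * (A - B) / 6 + r * (h * (A + B) / 6) := by
      rw [hEq1, hEq2, hr]
      have : ξ + h - ξ = h := by ring
      rw [this]
      field_simp
      ring
    rw [hE, Real.norm_eq_abs]
    have habs1 : |h * (A - B) / 6| ≤ h * (2 * f3 ξ) / 6 := by
      rw [abs_div, abs_mul, abs_of_pos hh0]
      have : |A - B| ≤ 2 * f3 ξ := by
        calc |A - B| ≤ |A| + |B| := abs_sub _ _
          _ ≤ 2 * f3 ξ := by linarith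
      rw [abs_of_nonneg (by norm_num : (0:ℝ) ≤ 6)]
      apply div_le_div_of_nonneg_right ?_ (by norm_num)
      exact mul_le_mul_of_nonneg_left this hh0.le
    have habs2 : |r * (h * (A + B) / 6)| ≤ h * (2 * f3 ξ) / 6 := by
      rw [abs_mul, abs_of_nonneg hr0, abs_div, abs_mul, abs_of_pos hh0,
        abs_of_nonneg (by norm_num : (0:ℝ) ≤ 6)]
      have h1 : |A + B| ≤ 2 * f3 ξ := by
        calc |A + B| ≤ |A| + |B| := abs_add_le _ _
          _ ≤ 2 * f3 ξ := by linarith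
      have h2 : h * |A + B| / 6 ≤ h * (2 * f3 ξ) / 6 := by
        apply div_le_div_of_nonneg_right ?_ (by norm_num)
        exact mul_le_mul_of_nonneg_left h1 hh0.le
      calc r * (h * |A + B| / 6) ≤ 1 * (h * (2 * f3 ξ) / 6) := by
            apply mul_le_mul hr1 h2 (by positivity) (by norm_num)
        _ = h * (2 * f3 ξ) / 6 := one_mul _
    calc |h * (A - B) / 6 + r * (h * (A + B) / 6)|
        ≤ |h * (A - B) / 6| + |r * (h * (A + B) / 6)| := abs_add_le _ _
      _ ≤ h * (2 * f3 ξ) / 6 + h * (2 * f3 ξ) / 6 := add_le_add habs1 habs2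
      _ ≤ 2 * h * f3 ξ := by nlinarith
  calc eLpNorm _ 2 (volume : Measure ℝ)
      ≤ eLpNorm (fun ξ => 2 * h * f3 ξ) 2 (volume : Measure ℝ) := eLpNorm_mono_real key
    _ = eLpNorm ((2 * h) • f3) 2 (volume : Measure ℝ) := by
        rfl
    _ = ‖(2 * h : ℝ)‖ₑ * eLpNorm f3 2 (volume : Measure ℝ) :=
        eLpNorm_const_smul _ _ _ _
    _ = ENNReal.ofReal (2 * h) * eLpNorm f3 2 (volume : Measure ℝ) := by
        rw [Real.enorm_eq_ofReal (by linarith)]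
end
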